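/- Let U ∈ M_n(ℂ) be unitary and P ∈ M_n(ℂ) self-adjoint with P ≠ I, such that P commutes with (U*)^k P U^k for all k = 1, …, n−1. Then P commutes with (U*)^k P U^k for all k ∈ ℕ. -/

import Mathlib

open Matrix

set_option maxHeartbeats 2000000 in
theorem commute_pow_of_commute_pow_lt {n : ℕ} (U P : Matrix (Fin n) (Fin n) ℂ)
    (hU : Uᴴ * U = 1) (hP : Pᴴ = P) (hPne : P ≠ 1)
    (hcomm : ∀ k : ℕ, 1 ≤ k → k ≤ n - 1 → Commute P ((Uᴴ) ^ k * P * U ^ k)) :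
    ∀ k : ℕ, Commute P ((Uᴴ) ^ k * P * U ^ k) := by
  rcases Nat.eq_zero_or_pos n with hn | hn
  · subst hn
    intro k
    show _ * _ = _ * _
    ext i j
    exact i.elim0
  have hU' : U * Uᴴ = 1 := mul_eq_one_comm.mp hU
  have h2 : ∀ X : Matrix (Fin n) (Fin n) ℂ, U * (Uᴴ * X) = X := fun X => by
    rw [← Matrix.mul_assoc, hU', Matrix.one_mul]
  set Q : ℕ → Matrix (Fin n) (Fin n) ℂ := fun k => Uᴴ ^ k * P * U ^ k with hQdef
  set φ : Matrix (Fin n) (Fin n) ℂ →ₗ[ℂ] Matrix (Fin n) (Fin n) ℂ :=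
    (LinearMap.mulLeft ℂ Uᴴ).comp (LinearMap.mulRight ℂ U) with hφdef
  have hφapply : ∀ X, φ X = Uᴴ * X * U := fun X => by
    simp only [hφdef, LinearMap.comp_apply, LinearMap.mulLeft_apply,
      LinearMap.mulRight_apply, Matrix.mul_assoc]
  have hQ0 : Q 0 = P := by simp [hQdef]
  have hQsucc : ∀ k, Q (k + 1) = φ (Q k) := by
    intro k
    rw [hφapply]
    show Uᴴ ^ (k+1) * P * U ^ (k+1) = Uᴴ * (Uᴴ ^ k * P * U ^ k) * U
    rw [pow_succ', pow_succ]
    simp only [Matrix.mul_assoc]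
  have hφmul : ∀ A B, φ (A * B) = φ A * φ B := by
    intro A B
    simp only [hφapply, Matrix.mul_assoc, h2]
  have hφcomm : ∀ A B, Commute A B → Commute (φ A) (φ B) := by
    intro A B hAB
    show φ A * φ B = φ B * φ A
    rw [← hφmul, ← hφmul, hAB.eq]
  have hQcomm : ∀ i d, 1 ≤ d → d ≤ n - 1 → Commute (Q i) (Q (i + d)) := by
    intro i
    induction i with
    | zero => intro d h1 h2; simpa [hQ0] using hcomm d h1 h2
    | succ i ih =>
      intro d h1 h2
      rw [show i + 1 + d = (i + d) + 1 by omega, hQsucc, hQsucc]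
      exact hφcomm _ _ (ih d h1 h2)
  have hQherm : ∀ k, (Q k)ᴴ = Q k := by
    intro k
    simp [hQdef, conjTranspose_mul, conjTranspose_pow, hP, Matrix.mul_assoc]
  -- Euclidean space setup
  have hTmul : ∀ A B : Matrix (Fin n) (Fin n) ℂ,
      toEuclideanLin (A * B) = (toEuclideanLin A) ∘ₗ (toEuclideanLin B) := by
    intro A B
    refine LinearMap.ext fun x => ?_
    simp [toEuclideanLin_apply, Matrix.mulVec_mulVec]
  set T : Fin n → (EuclideanSpace ℂ (Fin n) →ₗ[ℂ] EuclideanSpace ℂ (Fin n)) :=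
    fun i => toEuclideanLin (Q i) with hTdef
  have hTsym : ∀ i, (T i).IsSymmetric :=
    fun i => isHermitian_iff_isSymmetric.mp (hQherm i)
  have hTpair : Pairwise (Function.onFun Commute T) := by
    have key : ∀ i j : Fin n, (i : ℕ) < (j : ℕ) → Commute (T i) (T j) := by
      intro i j hij
      have hc : Commute (Q i) (Q j) := by
        have := hQcomm i ((j : ℕ) - i) (by omega) (by omega)
        rwa [show (i : ℕ) + ((j : ℕ) - i) = j by omega] at this
      show T i * T j = T j * T i
      simp only [hTdef, Module.End.mul_eq_comp, ← hTmul, hc.eq]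
    intro i j hij
    rcases lt_or_gt_of_ne hij with h | h
    · exact key i j h
    · exact (key j i h).symm
  have htop := LinearMap.IsSymmetric.iSup_iInf_eq_top_of_commute hTsym hTpair
  set S : Set (EuclideanSpace ℂ (Fin n)) := {x | ∀ i, ∃ μ : ℂ, T i x = μ • x} with hSdef
  have hspan : ⊤ ≤ Submodule.span ℂ S := by
    rw [← htop]
    refine iSup_le fun χ => ?_
    intro x hx
    exact Submodule.subset_span fun i =>
      ⟨χ i, Module.End.mem_eigenspace_iff.mp ((Submodule.mem_iInf _).mp hx i)⟩
  let b := Module.Basis.ofSpan hspan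
  have hbS : ∀ j, (b j) ∈ S := fun j => Module.Basis.ofSpan_subset hspan ⟨j, rfl⟩
  haveI := FiniteDimensional.fintypeBasisIndex b
  set L : Matrix (Fin n) (Fin n) ℂ →ₗ[ℂ] (_ → ℂ) :=
    { toFun := fun M j => b.repr (toEuclideanLin M (b j)) j
      map_add' := by intro M N; funext j; simp
      map_smul' := by intro c M; funext j; simp } with hLdef
  set W : Submodule ℂ (Matrix (Fin n) (Fin n) ℂ) :=
    { carrier := {M | ∀ j, ∃ μ : ℂ, toEuclideanLin M (b j) = μ • b j}
      add_mem' := by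
        intro M N hM hN j
        obtain ⟨μ, hμ⟩ := hM j
        obtain ⟨ν, hν⟩ := hN j
        exact ⟨μ + ν, by simp [hμ, hν, add_smul]⟩
      zero_mem' := fun j => ⟨0, by simp⟩
      smul_mem' := by
        intro c M hM j
        obtain ⟨μ, hμ⟩ := hM j
        exact ⟨c * μ, by simp [hμ, smul_smul]⟩ } with hWdef
  have hWmem : ∀ M : Matrix (Fin n) (Fin n) ℂ,
      M ∈ W ↔ ∀ j, ∃ μ : ℂ, toEuclideanLin M (b j) = μ • b j := fun M => Iff.rfl
  have hWrank : Module.finrank ℂ W ≤ n := by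
    have hinj : Function.Injective (L.domRestrict W) := by
      rw [← LinearMap.ker_eq_bot]
      refine (Submodule.eq_bot_iff _).mpr fun M hM => ?_
      have h0 : ∀ j, b.repr (toEuclideanLin (M : Matrix (Fin n) (Fin n) ℂ) (b j)) j = 0 := by
        intro j
        have h1 : L (M : Matrix (Fin n) (Fin n) ℂ) = 0 := LinearMap.mem_ker.mp hM
        exact congrFun h1 j
      have hzero : ∀ j, toEuclideanLin (M : Matrix (Fin n) (Fin n) ℂ) (b j) = 0 := by
        intro j
        obtain ⟨μ, hμ⟩ := M.2 j
        have hμ0 : μ = 0 := by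
          have h3 := h0 j
          rw [hμ] at h3
          simpa using h3
        rw [hμ, hμ0, zero_smul]
      have hlin : toEuclideanLin (M : Matrix (Fin n) (Fin n) ℂ) = 0 :=
        b.ext fun j => by simp [hzero j]
      have hM0 : (M : Matrix (Fin n) (Fin n) ℂ) = 0 := by
        apply Matrix.toEuclideanLin.injective
        rw [hlin, map_zero]
      exact Subtype.ext hM0
    have h1 := LinearMap.finrank_le_finrank_of_injective hinj
    rw [Module.finrank_pi ℂ, ← Module.finrank_eq_card_basis b,
      finrank_euclideanSpace_fin] at h1
    exact h1
  -- the chain of spans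
  set V : ℕ → Submodule ℂ (Matrix (Fin n) (Fin n) ℂ) :=
    fun m => Submodule.span ℂ (insert 1 (Q '' Set.Iio m)) with hVdef
  have hVW : V n ≤ W := by
    rw [hVdef]
    rw [Submodule.span_le]
    rintro x (rfl | ⟨i, hi, rfl⟩)
    · intro j
      refine ⟨1, ?_⟩
      simp [toEuclideanLin_apply, Matrix.one_mulVec]
    · intro j
      obtain ⟨μ, hμ⟩ := hbS j ⟨i, hi⟩
      exact ⟨μ, hμ⟩
  have hexists : ∃ m, m < n ∧ Q m ∈ V m := by
    by_contra hcon
    push_neg at hcon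
    have hstrict : ∀ m, m < n → V m < V (m + 1) := by
      intro m hm
      refine lt_of_le_of_ne (Submodule.span_mono ?_) fun he => ?_
      · exact Set.insert_subset_insert (Set.image_mono fun x hx => lt_trans hx (Nat.lt_succ_self m))
      · exact hcon m hm (he ▸ Submodule.subset_span (Set.mem_insert_iff.mpr
          (Or.inr ⟨m, Nat.lt_succ_self m, rfl⟩)))
    have hfin : ∀ m, m ≤ n → m + 1 ≤ Module.finrank ℂ (V m) := by
      intro m
      induction m with
      | zero =>
        intro _
        have hpos : 0 < Module.finrank ℂ (V 0) := by
          rw [Module.finrank_pos_iff_exists_ne_zero]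
          refine ⟨⟨1, Submodule.subset_span (Set.mem_insert _ _)⟩, fun h1 => ?_⟩
          have h3 : (1 : Matrix (Fin n) (Fin n) ℂ) = 0 := congrArg Subtype.val h1
          have h2 := Matrix.ext_iff.mpr h3 ⟨0, hn⟩ ⟨0, hn⟩
          rw [Matrix.one_apply_eq, Matrix.zero_apply] at h2
          exact one_ne_zero h2
        omega
      | succ m ih =>
        intro hm
        have h1 := ih (by omega)
        have h2 := Submodule.finrank_lt_finrank_of_lt (hstrict m (by omega))
        omega
    have hVmono : V n ≤ W := hVW
    have := hfin n le_rfl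
    have := Submodule.finrank_mono hVmono
    omega
  obtain ⟨m, hm, hQm⟩ := hexists
  -- all Q k lie in V m
  have hQV : ∀ k, Q k ∈ V m := by
    intro k
    induction k with
    | zero =>
      rcases Nat.eq_zero_or_pos m with h0 | h0
      · exact h0 ▸ hQm
      · exact Submodule.subset_span (Set.mem_insert_iff.mpr (Or.inr ⟨0, h0, rfl⟩))
    | succ k ih =>
      have hmap : Submodule.map φ (V m) ≤ V m := by
        rw [hVdef, Submodule.map_span, Submodule.span_le]
        rintro x ⟨y, (rfl | ⟨i, hi, rfl⟩), rfl⟩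
        · have : φ (1 : Matrix (Fin n) (Fin n) ℂ) = 1 := by
            rw [hφapply, Matrix.mul_one, hU]
          rw [this]
          exact Submodule.subset_span (Set.mem_insert _ _)
        · rw [← hQsucc]
          rcases Nat.lt_or_ge (i + 1) m with h | h
          · exact Submodule.subset_span (Set.mem_insert_iff.mpr (Or.inr ⟨i + 1, h, rfl⟩))
          · have : i + 1 = m := by simp only [Set.mem_Iio] at hi; omega
            exact this ▸ hQm
      exact hmap ⟨Q k, ih, (hQsucc k).symm⟩
  -- every element of V m commutes with P
  have hgen : ∀ x ∈ insert (1 : Matrix (Fin n) (Fin n) ℂ) (Q '' Set.Iio m), Commute P x := by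
    rintro x (rfl | ⟨i, hi, rfl⟩)
    · exact Commute.one_right P
    · rcases Nat.eq_zero_or_pos i with h0 | h0
      · subst h0
        rw [hQ0]
      · exact hcomm i h0 (by simp only [Set.mem_Iio] at hi; omega)
  have hPall : ∀ x ∈ V m, Commute P x := by
    intro x hx
    refine Submodule.span_induction (fun y hy => hgen y hy) (Commute.zero_right P)
      (fun y z _ _ hy hz => hy.add_right hz) (fun c y _ hy => hy.smul_right c) hx
  intro k
  exact hPall _ (hQV k)
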